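/- Let s ≥ 2, and for i = 1,2 let rᵢ be positive integers coprime to s and nᵢ integers coprime to rᵢ. If the sets of poles {ω_{r₁}^{-n₁ s^j} : j ∈ ℕ} and {ω_{r₂}^{-n₂ s^j} : j ∈ ℕ} have a common element (where ω_r = e^{2πi/r}), then r₁ = r₂ and the s-cyclotomic cosets C_{s,r₁,n₁} and C_{s,r₂,n₂} are equal. -/

import Mathlib

/-- The `s`-cyclotomic coset of `n` mod `r`: `C_{s,r,n} = {s^i·n mod r : i ∈ ℕ}`. -/
def cyclCoset (s r : ℕ) (n : ℤ) : Set ℤ := {c | ∃ i : ℕ, c = (s : ℤ) ^ i * n % r}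

lemma coset_sub (s r : ℕ) (n₁ n₂ : ℤ) (hr : 0 < r) (hcop : Nat.Coprime s r)
    (j₁ j₂ : ℕ) (h : n₁ * (s:ℤ)^j₁ ≡ n₂ * (s:ℤ)^j₂ [ZMOD (r:ℤ)]) :
    cyclCoset s r n₁ ⊆ cyclCoset s r n₂ := by
  intro c hc
  obtain ⟨i, rfl⟩ := hc
  set d := Nat.totient r with hd
  have hd1 : 1 ≤ d := Nat.totient_pos.mpr hr
  have hsd : ((s:ℤ))^d ≡ 1 [ZMOD (r:ℤ)] := by
    have h1 := Int.natCast_modEq_iff.mpr (Nat.ModEq.pow_totient hcop)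
    push_cast at h1
    exact h1
  refine ⟨i + j₁ * (d - 1) + j₂, ?_⟩
  have key : (s:ℤ)^i * n₁ ≡ (s:ℤ)^(i + j₁*(d-1) + j₂) * n₂ [ZMOD (r:ℤ)] := by
    have e1 : (s:ℤ)^i * n₁ ≡ (s:ℤ)^i * n₁ * ((s:ℤ)^d)^j₁ [ZMOD (r:ℤ)] := by
      conv_lhs => rw [← mul_one ((s:ℤ)^i * n₁)]
      refine (Int.ModEq.refl _).mul ?_
      simpa using (hsd.pow j₁).symm
    have hde : d * j₁ = j₁*(d-1) + j₁ := by
      have : d - 1 + 1 = d := Nat.succ_pred_eq_of_pos hd1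
      nlinarith [this]
    have e2 : (s:ℤ)^i * n₁ * ((s:ℤ)^d)^j₁ = (s:ℤ)^(i + j₁*(d-1)) * (n₁ * (s:ℤ)^j₁) := by
      rw [← pow_mul, hde, pow_add, pow_add]
      ring
    have e3 : (s:ℤ)^(i + j₁*(d-1)) * (n₁ * (s:ℤ)^j₁) ≡
        (s:ℤ)^(i + j₁*(d-1)) * (n₂ * (s:ℤ)^j₂) [ZMOD (r:ℤ)] :=
      (Int.ModEq.refl _).mul h
    calc (s:ℤ)^i * n₁ ≡ (s:ℤ)^i * n₁ * ((s:ℤ)^d)^j₁ [ZMOD (r:ℤ)] := e1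
      _ = (s:ℤ)^(i + j₁*(d-1)) * (n₁ * (s:ℤ)^j₁) := e2
      _ ≡ (s:ℤ)^(i + j₁*(d-1)) * (n₂ * (s:ℤ)^j₂) [ZMOD (r:ℤ)] := e3
      _ = (s:ℤ)^(i + j₁*(d-1) + j₂) * n₂ := by rw [pow_add]; ring
  exact key

/-- If the pole sets `{ω_{r₁}^{-n₁ s^j}}` and `{ω_{r₂}^{-n₂ s^j}}` share an element,
then `r₁ = r₂` and the corresponding `s`-cyclotomic cosets coincide. -/
theorem common_pole (s : ℕ) (hs : 2 ≤ s) (r₁ r₂ : ℕ) (n₁ n₂ : ℤ)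
    (hr₁ : 0 < r₁) (hr₂ : 0 < r₂)
    (hcop₁ : Nat.Coprime r₁ s) (hcop₂ : Nat.Coprime r₂ s)
    (hn₁ : IsCoprime n₁ (r₁ : ℤ)) (hn₂ : IsCoprime n₂ (r₂ : ℤ))
    (hpole : ∃ j₁ j₂ : ℕ,
      Complex.exp (2 * Real.pi * Complex.I / r₁) ^ (-(n₁ * (s : ℤ) ^ j₁)) =
      Complex.exp (2 * Real.pi * Complex.I / r₂) ^ (-(n₂ * (s : ℤ) ^ j₂))) :
    r₁ = r₂ ∧ cyclCoset s r₁ n₁ = cyclCoset s r₂ n₂ := by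
  obtain ⟨j₁, j₂, hpole⟩ := hpole
  rw [← Complex.exp_int_mul, ← Complex.exp_int_mul, Complex.exp_eq_exp_iff_exists_int] at hpole
  obtain ⟨k, hk⟩ := hpole
  have hR1 : (r₁:ℂ) ≠ 0 := Nat.cast_ne_zero.mpr hr₁.ne'
  have hR2 : (r₂:ℂ) ≠ 0 := Nat.cast_ne_zero.mpr hr₂.ne'
  have hπ : (2:ℂ) * Real.pi * Complex.I ≠ 0 := by
    simp [Real.pi_ne_zero, Complex.I_ne_zero]
  have hk2 : ((-(n₁ * (s:ℤ)^j₁) * r₂ : ℤ) : ℂ) * (2 * Real.pi * Complex.I) =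
      ((-(n₂ * (s:ℤ)^j₂) * r₁ + k * (r₁ * r₂) : ℤ) : ℂ) * (2 * Real.pi * Complex.I) := by
    push_cast
    field_simp at hk
    push_cast at hk
    linear_combination (2 * Real.pi * Complex.I) * hk
  have hk3 := mul_right_cancel₀ hπ hk2
  have hint : -(n₁ * (s:ℤ)^j₁) * r₂ = -(n₂ * (s:ℤ)^j₂) * r₁ + k * (r₁ * r₂) := by
    exact_mod_cast hk3
  have copS1 : IsCoprime ((r₁:ℤ)) ((s:ℤ)) := Nat.isCoprime_iff_coprime.mpr hcop₁
  have copS2 : IsCoprime ((r₂:ℤ)) ((s:ℤ)) := Nat.isCoprime_iff_coprime.mpr hcop₂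
  have cop1 : IsCoprime ((r₁:ℤ)) (n₁ * (s:ℤ)^j₁) := hn₁.symm.mul_right (copS1.pow_right)
  have cop2 : IsCoprime ((r₂:ℤ)) (n₂ * (s:ℤ)^j₂) := hn₂.symm.mul_right (copS2.pow_right)
  have d1 : (r₁:ℤ) ∣ (n₁ * (s:ℤ)^j₁) * r₂ := by
    refine ⟨n₂ * (s:ℤ)^j₂ - k * r₂, ?_⟩
    linear_combination -hint
  have d2 : (r₂:ℤ) ∣ (n₂ * (s:ℤ)^j₂) * r₁ := by
    refine ⟨n₁ * (s:ℤ)^j₁ + k * r₁, ?_⟩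
    linear_combination hint
  have hr12 : r₁ ∣ r₂ := Int.natCast_dvd_natCast.mp (cop1.dvd_of_dvd_mul_left d1)
  have hr21 : r₂ ∣ r₁ := Int.natCast_dvd_natCast.mp (cop2.dvd_of_dvd_mul_left d2)
  have hreq : r₁ = r₂ := Nat.dvd_antisymm hr12 hr21
  subst hreq
  refine ⟨rfl, ?_⟩
  have hR1' : (r₁:ℤ) ≠ 0 := by exact_mod_cast hr₁.ne'
  have hcancel : (n₁ * (s:ℤ)^j₁ - n₂ * (s:ℤ)^j₂) * r₁ = (-k * r₁) * r₁ := by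
    linear_combination -hint
  have hdvd : (r₁:ℤ) ∣ n₂ * (s:ℤ)^j₂ - n₁ * (s:ℤ)^j₁ := by
    have := mul_right_cancel₀ hR1' hcancel
    exact ⟨k, by linarith⟩
  have hmod : n₁ * (s:ℤ)^j₁ ≡ n₂ * (s:ℤ)^j₂ [ZMOD (r₁:ℤ)] := Int.modEq_iff_dvd.mpr hdvd
  exact Set.Subset.antisymm
    (coset_sub s r₁ n₁ n₂ hr₁ hcop₁.symm j₁ j₂ hmod)
    (coset_sub s r₁ n₂ n₁ hr₁ hcop₁.symm j₂ j₁ hmod.symm)
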